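/- Let g : S → {0,1} be an egalitarian Boolean function on the k-slice S of a 3k-element set, with p = P_{x∼U(S)}(g(x)=1). Then the replacement stability Stab_R(g) = ⟨g, T_R g⟩ satisfies p² − (p − p²)/8 ≤ Stab_R(g) ≤ p² + (p − p²)/4. -/

import Mathlib

variable {α : Type*} [DecidableEq α]

/-- The `k`-slice of `V`. -/
def kslice (V : Finset α) (k : ℕ) : Finset (Finset α) :=
  V.powerset.filter (fun x => x.card = k)

/-- A Boolean function on the `k`-slice is egalitarian if the conditional probability
that `g(x) = 1` given `i ∈ x` (for `x` uniform on the slice) is independent of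
`i ∈ V`; equivalently the counts `#{x ∈ S : i ∈ x ∧ g x = 1}` agree for all `i ∈ V`. -/
def Egalitarian (V : Finset α) (k : ℕ) (g : Finset α → Bool) : Prop :=
  ∀ i ∈ V, ∀ j ∈ V,
    ((kslice V k).filter (fun x => i ∈ x ∧ g x = true)).card
      = ((kslice V k).filter (fun x => j ∈ x ∧ g x = true)).card

set_option linter.unusedSectionVars false
set_option linter.unusedVariables false

namespace Stmt9

open Finset

lemma mem_kslice {V x : Finset α} {k : ℕ} : x ∈ kslice V k ↔ x ⊆ V ∧ x.card = k := by
  simp [kslice]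

variable (V : Finset α) (k : ℕ)

abbrev Om := {x : Finset α // x ∈ kslice V k}

def chi (T : Finset α) : Om V k → ℚ := fun x => if T ⊆ x.1 then 1 else 0

def ip (f g : Om V k → ℚ) : ℚ := ∑ x, f x * g x

def Dop (f : Om V k → ℚ) : Om V k → ℚ := fun x => ∑ y, if Disjoint y.1 x.1 then f y else 0

variable {V k}

lemma ip_comm (f g : Om V k → ℚ) : ip V k f g = ip V k g f := by
  simp [ip, mul_comm]

lemma ip_add_right (f g h : Om V k → ℚ) : ip V k f (g + h) = ip V k f g + ip V k f h := by
  simp [ip, mul_add, Finset.sum_add_distrib]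

lemma ip_sub_right (f g h : Om V k → ℚ) : ip V k f (g - h) = ip V k f g - ip V k f h := by
  simp [ip, mul_sub, Finset.sum_sub_distrib]

lemma ip_smul_right (c : ℚ) (f g : Om V k → ℚ) : ip V k f (c • g) = c * ip V k f g := by
  simp [ip, Finset.mul_sum]; apply Finset.sum_congr rfl; intros; ring

lemma ip_add_left (f g h : Om V k → ℚ) : ip V k (f + g) h = ip V k f h + ip V k g h := by
  simp [ip, add_mul, Finset.sum_add_distrib]

lemma ip_sub_left (f g h : Om V k → ℚ) : ip V k (f - g) h = ip V k f h - ip V k g h := by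
  simp [ip, sub_mul, Finset.sum_sub_distrib]

lemma ip_smul_left (c : ℚ) (f g : Om V k → ℚ) : ip V k (c • f) g = c * ip V k f g := by
  simp [ip, Finset.mul_sum]; apply Finset.sum_congr rfl; intros; ring

lemma ip_zero_left (f : Om V k → ℚ) : ip V k 0 f = 0 := by simp [ip]

lemma ip_zero_right (f : Om V k → ℚ) : ip V k f 0 = 0 := by simp [ip]

lemma ip_self_nonneg (f : Om V k → ℚ) : 0 ≤ ip V k f f :=
  Finset.sum_nonneg fun x _ => mul_self_nonneg _

lemma eq_zero_of_ip_self (f : Om V k → ℚ) (h : ip V k f f = 0) : f = 0 := by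
  funext x
  have := (Finset.sum_eq_zero_iff_of_nonneg (fun x _ => mul_self_nonneg (f x))).1 h x (Finset.mem_univ x)
  have : f x * f x = 0 := this
  simpa [mul_self_eq_zero] using this

lemma Dop_add (f g : Om V k → ℚ) : Dop V k (f + g) = Dop V k f + Dop V k g := by
  funext x
  show _ = Dop V k f x + Dop V k g x
  unfold Dop
  rw [← Finset.sum_add_distrib]
  apply Finset.sum_congr rfl; intro y _
  by_cases h : Disjoint y.1 x.1 <;> simp [h]

lemma Dop_smul (c : ℚ) (f : Om V k → ℚ) : Dop V k (c • f) = c • Dop V k f := by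
  funext x
  show _ = c * Dop V k f x
  unfold Dop
  rw [Finset.mul_sum]
  apply Finset.sum_congr rfl; intro y _
  by_cases h : Disjoint y.1 x.1 <;> simp [h]

lemma Dop_sub (f g : Om V k → ℚ) : Dop V k (f - g) = Dop V k f - Dop V k g := by
  funext x
  show _ = Dop V k f x - Dop V k g x
  unfold Dop
  rw [← Finset.sum_sub_distrib]
  apply Finset.sum_congr rfl; intro y _
  by_cases h : Disjoint y.1 x.1 <;> simp [h]

lemma Dop_symm (f g : Om V k → ℚ) : ip V k (Dop V k f) g = ip V k f (Dop V k g) := by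
  unfold ip Dop
  simp only [Finset.sum_mul, Finset.mul_sum]
  rw [Finset.sum_comm]
  apply Finset.sum_congr rfl; intro y _
  apply Finset.sum_congr rfl; intro x _
  by_cases h : Disjoint y.1 x.1
  · simp [h, disjoint_comm.1 h]
  · have h' : ¬ Disjoint x.1 y.1 := fun hh => h hh.symm
    simp [h, h']


lemma sum_indicator_eq_card (P : Finset α → Prop) [DecidablePred P] :
    (∑ y : Om V k, (if P y.1 then (1:ℚ) else 0)) = ((kslice V k).filter P).card := by
  rw [Finset.sum_coe_sort (kslice V k) (fun y => if P y then (1:ℚ) else 0)]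
  rw [Finset.sum_boole]

lemma count_disj (hV : V.card = 3*k) {x T : Finset α} (hx : x ∈ kslice V k)
    (hT : T ⊆ V) (hTk : T.card ≤ k) (hdisj : Disjoint T x) :
    ((kslice V k).filter (fun y => Disjoint y x ∧ T ⊆ y)).card
      = (2*k - T.card).choose (k - T.card) := by
  obtain ⟨hxV, hxc⟩ := mem_kslice.1 hx
  have hTVx : T ⊆ (V \ x) := fun a ha => Finset.mem_sdiff.2 ⟨hT ha, fun hax => (Finset.disjoint_left.1 hdisj ha) hax⟩
  have hcard : ((V \ x) \ T).card = 2*k - T.card := by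
    rw [Finset.card_sdiff_of_subset hTVx, Finset.card_sdiff_of_subset hxV, hV, hxc]
    omega
  rw [← hcard, ← Finset.card_powersetCard]
  apply Finset.card_bij' (fun y _ => y \ T) (fun z _ => T ∪ z)
  · intro y hy
    rw [Finset.mem_filter] at hy
    obtain ⟨hyS, hyx, hTy⟩ := hy
    obtain ⟨hyV, hyc⟩ := mem_kslice.1 hyS
    rw [Finset.mem_powersetCard]
    constructor
    · intro a ha
      rw [Finset.mem_sdiff] at ha ⊢
      refine ⟨Finset.mem_sdiff.2 ⟨hyV ha.1, fun hax => (Finset.disjoint_left.1 hyx ha.1) hax⟩, ha.2⟩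
    · rw [Finset.card_sdiff_of_subset hTy, hyc]
  · intro z hz
    rw [Finset.mem_powersetCard] at hz
    obtain ⟨hzsub, hzc⟩ := hz
    have hzVx : z ⊆ V \ x := fun a ha => (Finset.mem_sdiff.1 (hzsub ha)).1
    have hzT : Disjoint T z := Finset.disjoint_left.2 fun a haT haz => (Finset.mem_sdiff.1 (hzsub haz)).2 haT
    rw [Finset.mem_filter]
    refine ⟨mem_kslice.2 ⟨?_, ?_⟩, ?_, Finset.subset_union_left⟩
    · intro a ha
      rcases Finset.mem_union.1 ha with h | h
      · exact hT h
      · exact (Finset.mem_sdiff.1 (hzVx h)).1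
    · rw [Finset.card_union_of_disjoint hzT, hzc]
      omega
    · apply Finset.disjoint_union_left.2
      refine ⟨hdisj, ?_⟩
      exact Finset.disjoint_left.2 fun a haz hax => (Finset.mem_sdiff.1 (hzVx haz)).2 hax
  · intro y hy
    rw [Finset.mem_filter] at hy
    exact Finset.union_sdiff_of_subset hy.2.2
  · intro z hz
    rw [Finset.mem_powersetCard] at hz
    have hzT : Disjoint T z := Finset.disjoint_left.2 fun a haT haz => (Finset.mem_sdiff.1 (hz.1 haz)).2 haT
    exact Finset.union_sdiff_cancel_left hzT

lemma count_disj_empty (hV : V.card = 3*k) {x T : Finset α} (hx : x ∈ kslice V k)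
    (hdisj : ¬ Disjoint T x) :
    ((kslice V k).filter (fun y => Disjoint y x ∧ T ⊆ y)).card = 0 := by
  rw [Finset.card_eq_zero, Finset.filter_eq_empty_iff]
  rintro y hy ⟨hyx, hTy⟩
  exact hdisj (Finset.disjoint_of_subset_left hTy hyx)

lemma Dop_chi_apply (hV : V.card = 3*k) {T : Finset α} (hT : T ⊆ V) (hTk : T.card ≤ k)
    (x : Om V k) :
    Dop V k (chi V k T) x
      = ((2*k - T.card).choose (k - T.card) : ℚ) * (if Disjoint T x.1 then 1 else 0) := by
  unfold Dop chi
  have : (∑ y : Om V k, if Disjoint y.1 x.1 then (if T ⊆ y.1 then (1:ℚ) else 0) else 0)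
      = ∑ y : Om V k, (if Disjoint y.1 x.1 ∧ T ⊆ y.1 then (1:ℚ) else 0) := by
    apply Finset.sum_congr rfl; intro y _
    by_cases h1 : Disjoint y.1 x.1 <;> by_cases h2 : T ⊆ y.1 <;> simp [h1, h2]
  rw [this, sum_indicator_eq_card (fun y => Disjoint y x.1 ∧ T ⊆ y)]
  by_cases hd : Disjoint T x.1
  · rw [count_disj hV x.2 hT hTk hd]
    simp [hd]
  · rw [count_disj_empty hV x.2 hd]
    simp [hd]

lemma mobius_indicator {T : Finset α} (x : Om V k) :
    (if Disjoint T x.1 then (1:ℚ) else 0)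
      = ∑ U ∈ T.powerset, (-1:ℚ)^U.card * chi V k U x := by
  unfold chi
  have : ∀ U ∈ T.powerset, (-1:ℚ)^U.card * (if U ⊆ x.1 then (1:ℚ) else 0)
      = if U ⊆ x.1 then (-1:ℚ)^U.card else 0 := by
    intro U _; by_cases h : U ⊆ x.1 <;> simp [h]
  rw [Finset.sum_congr rfl this, Finset.sum_ite, Finset.sum_const_zero, add_zero]
  have hfilter : T.powerset.filter (fun U => U ⊆ x.1) = (T ∩ x.1).powerset := by
    ext U
    simp only [Finset.mem_filter, Finset.mem_powerset, Finset.subset_inter_iff]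
  rw [hfilter]
  have := @Finset.sum_powerset_neg_one_pow_card α _ (T ∩ x.1)
  have hcast : (∑ m ∈ (T ∩ x.1).powerset, (-1:ℚ)^m.card)
      = ((∑ m ∈ (T ∩ x.1).powerset, (-1:ℤ)^m.card : ℤ) : ℚ) := by
    push_cast; rfl
  rw [hcast, this]
  by_cases hd : Disjoint T x.1
  · rw [Finset.disjoint_iff_inter_eq_empty.1 hd]; simp [hd]
  · have : T ∩ x.1 ≠ ∅ := fun h => hd (Finset.disjoint_iff_inter_eq_empty.2 h)
    simp [hd, this]


variable (V k) in
def Vd (d : ℕ) : Submodule ℚ (Om V k → ℚ) :=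
  Submodule.span ℚ {f | ∃ T : Finset α, T ⊆ V ∧ T.card ≤ d ∧ f = chi V k T}

lemma chi_mem_Vd {T : Finset α} {d : ℕ} (hT : T ⊆ V) (hc : T.card ≤ d) :
    chi V k T ∈ Vd V k d :=
  Submodule.subset_span ⟨T, hT, hc, rfl⟩

lemma Vd_mono {d d' : ℕ} (h : d ≤ d') : Vd V k d ≤ Vd V k d' :=
  Submodule.span_mono (fun f hf => by
    obtain ⟨T, h1, h2, h3⟩ := hf
    exact ⟨T, h1, h2.trans h, h3⟩)

def mu (k d : ℕ) : ℚ := (-1)^d * ((2*k - d).choose (k - d))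

lemma Dop_zero : Dop V k (0 : Om V k → ℚ) = 0 := by
  funext x; simp [Dop]

lemma Dop_chi_expand (hV : V.card = 3*k) {T : Finset α} (hT : T ⊆ V) (hTk : T.card ≤ k) :
    Dop V k (chi V k T)
      = (((2*k - T.card).choose (k - T.card) : ℚ)) •
          ∑ U ∈ T.powerset, ((-1:ℚ)^U.card) • chi V k U := by
  funext x
  rw [Pi.smul_apply, Finset.sum_apply, Dop_chi_apply hV hT hTk x, mobius_indicator]
  simp [Finset.mul_sum]

lemma tri (hV : V.card = 3*k) {d : ℕ} (hd : d ≤ k) {f : Om V k → ℚ} (hf : f ∈ Vd V k d) :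
    Dop V k f - mu k d • f ∈ Vd V k (d-1) := by
  induction hf using Submodule.span_induction with
  | mem f hf =>
    obtain ⟨T, hT, hc, rfl⟩ := hf
    rw [Dop_chi_expand hV hT (hc.trans hd),
      ← Finset.add_sum_erase _ _ (Finset.mem_powerset_self T)]
    have hR : (∑ U ∈ T.powerset.erase T, ((-1:ℚ)^U.card) • chi V k U) ∈ Vd V k (d-1) := by
      apply Submodule.sum_mem
      intro U hU
      rw [Finset.mem_erase, Finset.mem_powerset] at hU
      have hUT : U ⊂ T := Finset.ssubset_iff_subset_ne.2 ⟨hU.2, hU.1⟩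
      have hUc : U.card ≤ d - 1 := by
        have := Finset.card_lt_card hUT
        omega
      exact Submodule.smul_mem _ _ (chi_mem_Vd (hUT.subset.trans hT) hUc)
    have key : ∀ (cc m : ℚ) (A R : Om V k → ℚ),
        cc • ((-1:ℚ)^T.card • A + R) - m • A = (cc * (-1:ℚ)^T.card - m) • A + cc • R := by
      intros; module
    rw [key]
    apply Submodule.add_mem
    · rcases eq_or_lt_of_le hc with heq | hlt
      · have : (((2*k - T.card).choose (k - T.card) : ℚ)) * (-1:ℚ)^T.card - mu k d = 0 := by
          rw [heq, mu]; ring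
        rw [this, zero_smul]
        exact Submodule.zero_mem _
      · have hTc : T.card ≤ d - 1 := by omega
        exact Submodule.smul_mem _ _ (chi_mem_Vd hT hTc)
    · exact Submodule.smul_mem _ _ hR
  | zero =>
    rw [Dop_zero, smul_zero, sub_zero]
    exact Submodule.zero_mem _
  | add f g hf hg ihf ihg =>
    have : Dop V k (f + g) - mu k d • (f + g)
        = (Dop V k f - mu k d • f) + (Dop V k g - mu k d • g) := by
      rw [Dop_add, smul_add]; abel
    rw [this]
    exact Submodule.add_mem _ ihf ihg
  | smul c f hf ih =>
    have : Dop V k (c • f) - mu k d • (c • f) = c • (Dop V k f - mu k d • f) := by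
      rw [Dop_smul, smul_sub, smul_comm]
    rw [this]
    exact Submodule.smul_mem _ _ ih

lemma Dop_mem (hV : V.card = 3*k) {d : ℕ} (hd : d ≤ k) {f : Om V k → ℚ} (hf : f ∈ Vd V k d) :
    Dop V k f ∈ Vd V k d := by
  have h1 := tri hV hd hf
  have h2 : Dop V k f = (Dop V k f - mu k d • f) + mu k d • f := by abel
  rw [h2]
  exact Submodule.add_mem _ (Vd_mono (Nat.sub_le d 1) h1) (Submodule.smul_mem _ _ hf)

lemma Vd_top : Vd V k k = ⊤ := by
  rw [eq_top_iff]
  intro f _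
  have hf : f = ∑ x : Om V k, f x • chi V k x.1 := by
    funext y
    rw [Finset.sum_apply]
    rw [Finset.sum_eq_single y]
    · obtain ⟨-, hyc⟩ := mem_kslice.1 y.2
      simp [chi]
    · intro x _ hxy
      obtain ⟨-, hxc⟩ := mem_kslice.1 x.2
      obtain ⟨-, hyc⟩ := mem_kslice.1 y.2
      have : ¬ (x.1 ⊆ y.1) := by
        intro hsub
        exact hxy (Subtype.ext (Finset.eq_of_subset_of_card_le hsub (by omega)))
      simp [chi, this]
    · intro hy
      exact absurd (Finset.mem_univ y) hy
  rw [hf]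
  apply Submodule.sum_mem
  intro x _
  exact Submodule.smul_mem _ _
    (chi_mem_Vd (mem_kslice.1 x.2).1 (le_of_eq (mem_kslice.1 x.2).2))

lemma choose_pow_le : ∀ d ≤ k, (2*k - d).choose (k - d) * 2^d ≤ (2*k).choose k := by
  intro d
  induction d with
  | zero => intro _; simp
  | succ d ih =>
    intro hd
    have hdk : d ≤ k := by omega
    have step : 2 * ((2*k - (d+1)).choose (k - (d+1))) ≤ (2*k - d).choose (k - d) := by
      set m := 2*k - d - 1 with hm
      set j := k - d - 1 with hj
      have h1 : 2*k - (d+1) = m := by omega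
      have h2 : k - (d+1) = j := by omega
      have h3 : 2*k - d = m + 1 := by omega
      have h4 : k - d = j + 1 := by omega
      rw [h1, h2, h3, h4]
      have hmj : 2 * (j+1) ≤ m + 1 := by omega
      have key := Nat.add_one_mul_choose_eq m j
      have : 2 * (j+1) * m.choose j ≤ (m+1) * m.choose j :=
        Nat.mul_le_mul_right _ hmj
      rw [key] at this
      have : 2 * m.choose j * (j+1) ≤ (m+1).choose (j+1) * (j+1) := by
        calc 2 * m.choose j * (j+1) = 2 * (j+1) * m.choose j := by ring
        _ ≤ (m+1).choose (j+1) * (j+1) := this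
      exact Nat.le_of_mul_le_mul_right this (by omega)
    calc (2*k - (d+1)).choose (k - (d+1)) * 2^(d+1)
        = (2 * ((2*k - (d+1)).choose (k - (d+1)))) * 2^d := by ring
      _ ≤ (2*k - d).choose (k - d) * 2^d := Nat.mul_le_mul_right _ step
      _ ≤ (2*k).choose k := ih hdk

lemma mu_bounds {d : ℕ} (hd2 : 2 ≤ d) (hdk : d ≤ k) :
    -(((2*k).choose k : ℚ)/8) ≤ mu k d ∧ mu k d ≤ ((2*k).choose k : ℚ)/4 := by
  set c : ℚ := ((2*k - d).choose (k - d) : ℚ) with hc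
  have hc0 : 0 ≤ c := by positivity
  have hC0 : (0:ℚ) ≤ ((2*k).choose k : ℚ) := by positivity
  have hkey : c * 2^d ≤ ((2*k).choose k : ℚ) := by
    have := choose_pow_le d hdk
    calc c * 2^d = (((2*k - d).choose (k - d) * 2^d : ℕ) : ℚ) := by push_cast; ring
      _ ≤ _ := by exact_mod_cast this
  rcases Nat.even_or_odd d with he | ho
  · have hmu : mu k d = c := by rw [mu, he.neg_one_pow, one_mul]
    have h4 : (4:ℚ) ≤ 2^d := by
      calc (4:ℚ) = 2^2 := by norm_num
        _ ≤ 2^d := by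
          apply pow_le_pow_right₀ (by norm_num) hd2
    constructor
    · rw [hmu]; nlinarith
    · rw [hmu]
      nlinarith
  · have hmu : mu k d = -c := by rw [mu, ho.neg_one_pow, neg_one_mul]
    have hd3 : 3 ≤ d := by
      rcases ho with ⟨m, hm⟩; omega
    have h8 : (8:ℚ) ≤ 2^d := by
      calc (8:ℚ) = 2^3 := by norm_num
        _ ≤ 2^d := by
          apply pow_le_pow_right₀ (by norm_num) hd3
    constructor
    · rw [hmu]; nlinarith
    · rw [hmu]; nlinarith


variable (V k) in
def ipL : (Om V k → ℚ) →ₗ[ℚ] (Om V k → ℚ) →ₗ[ℚ] ℚ :=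
  LinearMap.mk₂ ℚ (ip V k)
    (fun f g h => ip_add_left f g h)
    (fun c f g => by rw [ip_smul_left]; rfl)
    (fun f g h => ip_add_right f g h)
    (fun c f g => by rw [ip_smul_right]; rfl)

lemma ipL_apply (f g : Om V k → ℚ) : ipL V k f g = ip V k f g := rfl

lemma exists_proj (W : Submodule ℚ (Om V k → ℚ)) (f : Om V k → ℚ) :
    ∃ h ∈ W, ∀ w ∈ W, ip V k (f - h) w = 0 := by
  classical
  let Φ : W →ₗ[ℚ] Module.Dual ℚ W :=
    { toFun := fun h => (ipL V k h.1).comp W.subtype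
      map_add' := by intro a b; ext w; simp
      map_smul' := by intro c a; ext w; simp }
  have hΦ : ∀ (h : W) (w : W), Φ h w = ip V k h.1 w.1 := fun h w => rfl
  have hinj : Function.Injective Φ := by
    rw [← LinearMap.ker_eq_bot]
    rw [Submodule.eq_bot_iff]
    intro h hh
    rw [LinearMap.mem_ker] at hh
    have : ip V k h.1 h.1 = 0 := by
      rw [← hΦ h h, hh]; rfl
    exact Subtype.ext (eq_zero_of_ip_self h.1 this)
  have hsurj : Function.Surjective Φ :=
    (LinearMap.injective_iff_surjective_of_finrank_eq_finrank
      (Subspace.dual_finrank_eq).symm).1 hinj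
  obtain ⟨h, hh⟩ := hsurj ((ipL V k f).comp W.subtype)
  refine ⟨h.1, h.2, fun w hw => ?_⟩
  have := congrArg (fun φ => φ ⟨w, hw⟩) hh
  simp only [hΦ] at this
  have h2 : ip V k h.1 w = ip V k f w := this
  rw [ip_sub_left, h2, sub_self]


lemma orth_eq_zero {d : ℕ} (hd : d ≤ 1) {f : Om V k → ℚ} (hf : f ∈ Vd V k d)
    (ho : ∀ T : Finset α, T ⊆ V → T.card ≤ 1 → ip V k (chi V k T) f = 0) : f = 0 := by
  have hall : ∀ w ∈ Vd V k d, ip V k w f = 0 := by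
    intro w hw
    induction hw using Submodule.span_induction with
    | mem w hw =>
      obtain ⟨T, hT, hc, rfl⟩ := hw
      exact ho T hT (hc.trans hd)
    | zero => exact ip_zero_left f
    | add a b ha hb iha ihb => rw [ip_add_left, iha, ihb, add_zero]
    | smul c a ha iha => rw [ip_smul_left, iha, mul_zero]
  exact eq_zero_of_ip_self f (hall f hf)

lemma key_bound (hV : V.card = 3*k) :
    ∀ d, d ≤ k → ∀ f ∈ Vd V k d,
      (∀ T : Finset α, T ⊆ V → T.card ≤ 1 → ip V k (chi V k T) f = 0) →
      -((((2*k).choose k : ℚ))/8) * ip V k f f ≤ ip V k f (Dop V k f) ∧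
        ip V k f (Dop V k f) ≤ (((2*k).choose k : ℚ)/4) * ip V k f f := by
  intro d
  induction d with
  | zero =>
    intro _ f hf ho
    rw [orth_eq_zero (by norm_num) hf ho]
    rw [Dop_zero, ip_zero_left]
    simp
  | succ d ih =>
    intro hdk f hf ho
    rcases Nat.lt_or_ge d 1 with hd0 | hd1
    · interval_cases d
      rw [orth_eq_zero (by norm_num) hf ho]
      rw [Dop_zero, ip_zero_left]
      simp
    · -- d ≥ 1, so d+1 ≥ 2
      obtain ⟨h, hhW, hq⟩ := exists_proj (Vd V k d) f
      set q : Om V k → ℚ := f - h with hqdef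
      have hqorth : ∀ w ∈ Vd V k d, ip V k q w = 0 := hq
      have hfq : f = h + q := by rw [hqdef]; abel
      have hdk' : d ≤ k := by omega
      have hqV : q ∈ Vd V k (d+1) :=
        Submodule.sub_mem _ hf (Vd_mono (Nat.le_succ d) hhW)
      have horth : ∀ T : Finset α, T ⊆ V → T.card ≤ 1 → ip V k (chi V k T) h = 0 := by
        intro T hT hc
        have h1 : ip V k (chi V k T) h = ip V k (chi V k T) f - ip V k (chi V k T) q := by
          rw [← ip_sub_right, hqdef]
          congr 1
          abel
        rw [h1, ho T hT hc, ip_comm, hqorth _ (chi_mem_Vd hT (hc.trans hd1)), sub_zero]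
      have hIH := ih hdk' h hhW horth
      -- q is an eigenvector
      have hr1 : Dop V k q - mu k (d+1) • q ∈ Vd V k d := by
        have := tri hV hdk hqV
        simpa using this
      have hrorth : ∀ w ∈ Vd V k d, ip V k (Dop V k q - mu k (d+1) • q) w = 0 := by
        intro w hw
        have e1 : ip V k (Dop V k q) w = 0 := by
          rw [Dop_symm]
          exact hqorth _ (Dop_mem hV hdk' hw)
        rw [ip_sub_left, ip_smul_left, e1, hqorth _ hw]
        ring
      have hr0 : Dop V k q - mu k (d+1) • q = 0 :=
        eq_zero_of_ip_self _ (hrorth _ hr1)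
      have hDq : Dop V k q = mu k (d+1) • q := by
        have := sub_eq_zero.1 hr0
        exact this
      -- expand
      have hipfDf : ip V k f (Dop V k f) = ip V k h (Dop V k h) + mu k (d+1) * ip V k q q := by
        rw [hfq, Dop_add, hDq]
        rw [ip_add_left, ip_add_right, ip_add_right, ip_smul_right, ip_smul_right]
        have e1 : ip V k h q = 0 := by rw [ip_comm]; exact hqorth _ hhW
        have e2 : ip V k q (Dop V k h) = 0 := hqorth _ (Dop_mem hV hdk' hhW)
        rw [e1, e2]
        ring
      have hipff : ip V k f f = ip V k h h + ip V k q q := by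
        rw [hfq, ip_add_left, ip_add_right, ip_add_right]
        have e1 : ip V k h q = 0 := by rw [ip_comm]; exact hqorth _ hhW
        have e2 : ip V k q h = 0 := hqorth _ hhW
        rw [e1, e2]
        ring
      have hmu := mu_bounds (k := k) (d := d+1) (by omega) hdk
      have hqq : 0 ≤ ip V k q q := ip_self_nonneg q
      have hhh : 0 ≤ ip V k h h := ip_self_nonneg h
      rw [hipfDf, hipff]
      obtain ⟨hL, hU⟩ := hIH
      obtain ⟨hmL, hmU⟩ := hmu
      constructor
      · nlinarith
      · nlinarith


section Assembly

variable (g : Finset α → Bool)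

variable (V k) in
def gq : Om V k → ℚ := fun x => if g x.1 = true then 1 else 0

lemma chi_empty_apply (x : Om V k) : chi V k ∅ x = 1 := by
  simp [chi]

lemma ip_gq_gq : ip V k (gq V k g) (gq V k g)
    = (((kslice V k).filter (fun x => g x = true)).card : ℚ) := by
  rw [← sum_indicator_eq_card (fun x => g x = true)]
  unfold ip gq
  apply Finset.sum_congr rfl
  intro x _
  by_cases h : g x.1 = true <;> simp [h]

lemma ip_chi_empty_gq : ip V k (chi V k ∅) (gq V k g)
    = (((kslice V k).filter (fun x => g x = true)).card : ℚ) := by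
  rw [← sum_indicator_eq_card (fun x => g x = true)]
  unfold ip gq
  apply Finset.sum_congr rfl
  intro x _
  rw [chi_empty_apply, one_mul]

lemma ip_chi_empty_chi_empty : ip V k (chi V k ∅) (chi V k ∅) = ((kslice V k).card : ℚ) := by
  unfold ip
  have : ∀ x : Om V k, chi V k ∅ x * chi V k ∅ x = 1 := by
    intro x; rw [chi_empty_apply]; norm_num
  rw [Finset.sum_congr rfl (fun x _ => this x), Finset.sum_const, Finset.card_univ,
    Fintype.card_coe, nsmul_eq_mul, mul_one]

lemma ip_chi_singleton_gq (i : α) : ip V k (chi V k {i}) (gq V k g)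
    = (((kslice V k).filter (fun x => i ∈ x ∧ g x = true)).card : ℚ) := by
  rw [← sum_indicator_eq_card (fun x => i ∈ x ∧ g x = true)]
  unfold ip gq chi
  apply Finset.sum_congr rfl
  intro x _
  by_cases h1 : i ∈ x.1 <;> by_cases h2 : g x.1 = true <;>
    simp [h1, h2, Finset.singleton_subset_iff]

lemma ip_chi_singleton_chi_empty (i : α) : ip V k (chi V k {i}) (chi V k ∅)
    = (((kslice V k).filter (fun x => i ∈ x)).card : ℚ) := by
  rw [← sum_indicator_eq_card (fun x => i ∈ x)]
  unfold ip chi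
  apply Finset.sum_congr rfl
  intro x _
  by_cases h1 : i ∈ x.1 <;> simp [h1, Finset.singleton_subset_iff]

lemma Dop_chi_empty (hV : V.card = 3*k) :
    Dop V k (chi V k ∅) = (((2*k).choose k : ℚ)) • chi V k ∅ := by
  funext x
  rw [Pi.smul_apply, Dop_chi_apply hV (Finset.empty_subset V) (Nat.zero_le k)]
  simp [chi_empty_apply]

lemma ip_gq_Dop_gq (hV : V.card = 3*k) :
    ip V k (gq V k g) (Dop V k (gq V k g))
      = (((kslice V k ×ˢ kslice V k).filter
          (fun q => Disjoint q.1 q.2 ∧ (g q.1 = true ∧ g q.2 = true))).card : ℚ) := by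
  have hsum : ((((kslice V k ×ˢ kslice V k).filter
      (fun q => Disjoint q.1 q.2 ∧ (g q.1 = true ∧ g q.2 = true))).card : ℚ))
      = ∑ x ∈ kslice V k, ∑ y ∈ kslice V k,
          (if Disjoint x y ∧ (g x = true ∧ g y = true) then (1:ℚ) else 0) := by
    rw [← Finset.sum_boole, Finset.sum_product]
  rw [hsum]
  unfold ip Dop gq
  rw [← Finset.sum_coe_sort (kslice V k)
    (fun x => ∑ y ∈ kslice V k, (if Disjoint x y ∧ (g x = true ∧ g y = true) then (1:ℚ) else 0))]
  apply Finset.sum_congr rfl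
  intro x _
  rw [← Finset.sum_coe_sort (kslice V k)
    (fun y => (if Disjoint x.1 y ∧ (g x.1 = true ∧ g y = true) then (1:ℚ) else 0))]
  rw [Finset.mul_sum]
  apply Finset.sum_congr rfl
  intro y _
  by_cases h1 : Disjoint x.1 y.1 <;> by_cases h2 : g x.1 = true <;> by_cases h3 : g y.1 = true <;>
    simp [h1, h2, h3, disjoint_comm]

lemma cardP (hV : V.card = 3*k) :
    ((kslice V k ×ˢ kslice V k).filter (fun q => Disjoint q.1 q.2)).card
      = (kslice V k).card * (2*k).choose k := by
  rw [Finset.card_filter, Finset.sum_product]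
  have : ∀ x ∈ kslice V k,
      (∑ y ∈ kslice V k, if Disjoint x y then 1 else 0) = (2*k).choose k := by
    intro x hx
    rw [← Finset.card_filter]
    have hcongr : (kslice V k).filter (fun y => Disjoint x y)
        = (kslice V k).filter (fun y => Disjoint y x ∧ ∅ ⊆ y) := by
      apply Finset.filter_congr
      intro y _
      simp [disjoint_comm]
    rw [hcongr, count_disj hV hx (Finset.empty_subset V) (Nat.zero_le k)
      (Finset.disjoint_left.2 (fun a ha => absurd ha (Finset.notMem_empty a)))]
    simp
  rw [Finset.sum_congr rfl this, Finset.sum_const, smul_eq_mul]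

lemma card_kslice (hV : V.card = 3*k) : (kslice V k).card = (3*k).choose k := by
  have : kslice V k = V.powersetCard k := by
    rw [Finset.powersetCard_eq_filter]; rfl
  rw [this, Finset.card_powersetCard, hV]

lemma count_mem (hV : V.card = 3*k) {i : α} (hi : i ∈ V) (hk : 1 ≤ k) :
    ((kslice V k).filter (fun x => i ∈ x)).card = (3*k-1).choose (k-1) := by
  have hVe : (V.erase i).card = 3*k - 1 := by rw [Finset.card_erase_of_mem hi, hV]
  rw [← hVe, ← Finset.card_powersetCard]
  refine Finset.card_bij' (fun x _ => x.erase i) (fun z _ => insert i z) ?hi ?hj ?left ?right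
  case hi =>
    intro x hx
    rw [Finset.mem_filter] at hx
    obtain ⟨hxS, hix⟩ := hx
    obtain ⟨hxV, hxc⟩ := mem_kslice.1 hxS
    rw [Finset.mem_powersetCard]
    exact ⟨Finset.erase_subset_erase i hxV, by rw [Finset.card_erase_of_mem hix, hxc]⟩
  case hj =>
    intro z hz
    rw [Finset.mem_powersetCard] at hz
    obtain ⟨hzV, hzc⟩ := hz
    have hiz : i ∉ z := fun h => (Finset.notMem_erase i V) (hzV h)
    rw [Finset.mem_filter]
    refine ⟨mem_kslice.2 ⟨?_, ?_⟩, Finset.mem_insert_self i z⟩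
    · intro a ha
      rcases Finset.mem_insert.1 ha with h | h
      · rw [h]; exact hi
      · exact Finset.erase_subset i V (hzV h)
    · rw [Finset.card_insert_of_notMem hiz, hzc]
      omega
  case left =>
    intro x hx
    rw [Finset.mem_filter] at hx
    exact Finset.insert_erase hx.2
  case right =>
    intro z hz
    rw [Finset.mem_powersetCard] at hz
    have hiz : i ∉ z := fun h => (Finset.notMem_erase i V) (hz.1 h)
    exact Finset.erase_insert hiz

lemma sum_count (hV : V.card = 3*k) :
    ∑ i ∈ V, ((kslice V k).filter (fun x => i ∈ x ∧ g x = true)).card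
      = k * ((kslice V k).filter (fun x => g x = true)).card := by
  have h1 : ∀ i, ((kslice V k).filter (fun x => i ∈ x ∧ g x = true)).card
      = ∑ x ∈ kslice V k, if i ∈ x ∧ g x = true then 1 else 0 := by
    intro i; rw [Finset.card_filter]
  rw [Finset.sum_congr rfl (fun i _ => h1 i), Finset.sum_comm]
  have h2 : ∀ x ∈ kslice V k,
      (∑ i ∈ V, if i ∈ x ∧ g x = true then 1 else 0) = if g x = true then k else 0 := by
    intro x hx
    obtain ⟨hxV, hxc⟩ := mem_kslice.1 hx
    by_cases hgx : g x = true
    · simp only [hgx, and_true, if_true]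
      rw [← Finset.card_filter]
      have : V.filter (fun i => i ∈ x) = x := by
        ext a
        simp only [Finset.mem_filter]
        exact ⟨fun h => h.2, fun h => ⟨hxV h, h⟩⟩
      rw [this, hxc]
    · simp [hgx]
  rw [Finset.sum_congr rfl h2, ← Finset.sum_filter, Finset.sum_const, smul_eq_mul, mul_comm]

lemma ci_eq (hV : V.card = 3*k) (hg : Egalitarian V k g) {i : α} (hi : i ∈ V) (hk : 1 ≤ k) :
    3 * ((kslice V k).filter (fun x => i ∈ x ∧ g x = true)).card
      = ((kslice V k).filter (fun x => g x = true)).card := by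
  have hsum := sum_count g hV
  have hconst : ∀ j ∈ V, ((kslice V k).filter (fun x => j ∈ x ∧ g x = true)).card
      = ((kslice V k).filter (fun x => i ∈ x ∧ g x = true)).card := fun j hj => hg j hj i hi
  rw [Finset.sum_congr rfl hconst, Finset.sum_const, hV, smul_eq_mul] at hsum
  have := Nat.eq_of_mul_eq_mul_left (show 0 < k by omega)
    (show k * (3 * ((kslice V k).filter (fun x => i ∈ x ∧ g x = true)).card)
      = k * ((kslice V k).filter (fun x => g x = true)).card by
        rw [← hsum]; ring)
  exact this


lemma ip_expand (f1 g1 f2 g2 : Om V k → ℚ) (c d : ℚ) :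
    ip V k (f1 - c • g1) (f2 - d • g2)
      = ip V k f1 f2 - d * ip V k f1 g2 - c * ip V k g1 f2 + c * d * ip V k g1 g2 := by
  rw [ip_sub_left, ip_sub_right, ip_sub_right, ip_smul_left, ip_smul_left, ip_smul_right,
    ip_smul_right]
  ring

end Assembly

end Stmt9



/-- for an egalitarian Boolean function `g` on the `k`-slice of a
`3k`-set, with `p = P_{x∼U(S)}(g(x)=1)`, the replacement stability
`Stab_R(g) = ⟨g, T_R g⟩ = P(g(x)=g(y)=1)` for `x` uniform and `y` uniform over the
`k`-sets disjoint from `x`, satisfies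
`p² − (p − p²)/8 ≤ Stab_R(g) ≤ p² + (p − p²)/4`. -/
theorem stmt9 (k : ℕ) (V : Finset α) (hV : V.card = 3 * k)
    (g : Finset α → Bool) (hg : Egalitarian V k g) :
    let S := kslice V k
    let P := (S ×ˢ S).filter (fun q => Disjoint q.1 q.2)
    let p : ℚ := ((S.filter (fun x => g x = true)).card : ℚ) / S.card
    let Stab : ℚ := ((P.filter (fun q => g q.1 = true ∧ g q.2 = true)).card : ℚ) / P.card
    p ^ 2 - (p - p ^ 2) / 8 ≤ Stab ∧ Stab ≤ p ^ 2 + (p - p ^ 2) / 4 := by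
  intro S P p Stab
  classical
  open Stmt9 in
  have hV' : V.card = 3*k := hV
  set a : ℕ := ((kslice V k).filter (fun x => g x = true)).card with ha
  set N : ℕ := (kslice V k).card with hN
  set C : ℕ := (2*k).choose k with hC
  set B : ℕ := ((kslice V k ×ˢ kslice V k).filter
      (fun q => Disjoint q.1 q.2 ∧ (g q.1 = true ∧ g q.2 = true))).card with hB
  have hNval : N = (3*k).choose k := Stmt9.card_kslice hV'
  have hNpos : 0 < N := by rw [hNval]; exact Nat.choose_pos (by omega)
  have hCpos : 0 < C := Nat.choose_pos (by omega)
  have hNq : (0:ℚ) < (N:ℚ) := by exact_mod_cast hNpos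
  have hCq : (0:ℚ) < (C:ℚ) := by exact_mod_cast hCpos
  set p' : ℚ := (a:ℚ)/(N:ℚ) with hp'
  set f₀ : Stmt9.Om V k → ℚ := Stmt9.gq V k g - p' • Stmt9.chi V k ∅ with hf₀
  -- orthogonality
  have horth : ∀ T : Finset α, T ⊆ V → T.card ≤ 1 → Stmt9.ip V k (Stmt9.chi V k T) f₀ = 0 := by
    intro T hT hc
    rcases Nat.le_one_iff_eq_zero_or_eq_one.1 hc with h0 | h1
    · have hTe : T = ∅ := Finset.card_eq_zero.1 h0
      subst hTe
      rw [hf₀, Stmt9.ip_sub_right, Stmt9.ip_smul_right, Stmt9.ip_chi_empty_gq,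
        Stmt9.ip_chi_empty_chi_empty, hp']
      field_simp
      rw [← ha, ← hN]; ring
    · obtain ⟨i, rfl⟩ := Finset.card_eq_one.1 h1
      have hi : i ∈ V := Finset.singleton_subset_iff.1 hT
      have hk1 : 1 ≤ k := by
        by_contra hk0
        have hk : k = 0 := by omega
        have : V.card = 0 := by rw [hV']; omega
        rw [Finset.card_eq_zero] at this
        rw [this] at hi
        exact absurd hi (Finset.notMem_empty i)
      rw [hf₀, Stmt9.ip_sub_right, Stmt9.ip_smul_right, Stmt9.ip_chi_singleton_gq,
        Stmt9.ip_chi_singleton_chi_empty, hp']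
      have h3 : 3 * ((kslice V k).filter (fun x => i ∈ x ∧ g x = true)).card = a :=
        Stmt9.ci_eq g hV' hg hi hk1
      have hD : ((kslice V k).filter (fun x => i ∈ x)).card = (3*k-1).choose (k-1) :=
        Stmt9.count_mem hV' hi hk1
      have hNC : k * ((3*k).choose k) = 3*k * ((3*k-1).choose (k-1)) := by
        have hh := Nat.add_one_mul_choose_eq (3*k-1) (k-1)
        have e1 : (3*k-1) + 1 = 3*k := by omega
        have e2 : (k-1) + 1 = k := by omega
        rw [e1, e2] at hh
        calc k * ((3*k).choose k) = (3*k).choose k * k := by ring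
          _ = 3*k * ((3*k-1).choose (k-1)) := by rw [← hh]
      have hN3 : (N:ℚ) = 3 * (((3*k-1).choose (k-1) : ℕ) : ℚ) := by
        have hcast : (k:ℚ) * (N:ℚ) = (k:ℚ) * (3 * (((3*k-1).choose (k-1) : ℕ) : ℚ)) := by
          rw [hNval]
          push_cast
          have : ((k:ℚ)) * (((3*k).choose k : ℕ) : ℚ)
              = ((3:ℚ)*k) * (((3*k-1).choose (k-1) : ℕ) : ℚ) := by
            exact_mod_cast congrArg (fun n : ℕ => (n:ℚ)) hNC
          rw [this]; ring
        have hk0 : (k:ℚ) ≠ 0 := by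
          have : (0:ℚ) < (k:ℚ) := by exact_mod_cast hk1
          linarith
        exact mul_left_cancel₀ hk0 hcast
      have hac : (a:ℚ) = 3 * (((kslice V k).filter (fun x => i ∈ x ∧ g x = true)).card : ℚ) := by
        exact_mod_cast congrArg (fun n : ℕ => (n:ℚ)) h3.symm
      rw [hD]
      rw [hac, hN3]
      have hD0 : (((3*k-1).choose (k-1) : ℕ) : ℚ) ≠ 0 := by
        intro h
        rw [h] at hN3
        simp at hN3
        rw [hN3] at hNq
        exact absurd hNq (lt_irrefl 0)
      field_simp
      ring
  have hmem : f₀ ∈ Stmt9.Vd V k k := by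
    rw [Stmt9.Vd_top]
    exact Submodule.mem_top
  have hkey := Stmt9.key_bound hV' k le_rfl f₀ hmem horth
  -- expansions
  have e_ff : Stmt9.ip V k f₀ f₀ = (a:ℚ) - 2*p'*(a:ℚ) + p'^2*(N:ℚ) := by
    rw [hf₀, Stmt9.ip_expand, Stmt9.ip_gq_gq, Stmt9.ip_chi_empty_chi_empty]
    have h1 : Stmt9.ip V k (Stmt9.gq V k g) (Stmt9.chi V k ∅) = (a:ℚ) := by
      rw [Stmt9.ip_comm, Stmt9.ip_chi_empty_gq]
    have h2 : Stmt9.ip V k (Stmt9.chi V k ∅) (Stmt9.gq V k g) = (a:ℚ) :=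
      Stmt9.ip_chi_empty_gq g
    rw [h1, h2, ← ha, ← hN]
    ring
  have hDop : Stmt9.Dop V k f₀
      = Stmt9.Dop V k (Stmt9.gq V k g) - (p' * (C:ℚ)) • Stmt9.chi V k ∅ := by
    rw [hf₀, Stmt9.Dop_sub, Stmt9.Dop_smul, Stmt9.Dop_chi_empty hV', smul_smul, ← hC]
  have e_fDf : Stmt9.ip V k f₀ (Stmt9.Dop V k f₀)
      = (B:ℚ) - 2*p'*(C:ℚ)*(a:ℚ) + p'^2*(C:ℚ)*(N:ℚ) := by
    rw [hf₀, hDop, Stmt9.ip_expand, Stmt9.ip_gq_Dop_gq g hV', Stmt9.ip_chi_empty_chi_empty]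
    have h1 : Stmt9.ip V k (Stmt9.gq V k g) (Stmt9.chi V k ∅) = (a:ℚ) := by
      rw [Stmt9.ip_comm, Stmt9.ip_chi_empty_gq]
    have h2 : Stmt9.ip V k (Stmt9.chi V k ∅) (Stmt9.Dop V k (Stmt9.gq V k g))
        = (C:ℚ) * (a:ℚ) := by
      rw [← Stmt9.Dop_symm, Stmt9.Dop_chi_empty hV', Stmt9.ip_smul_left,
        Stmt9.ip_chi_empty_gq, ← ha, ← hC]
    rw [h1, h2, ← hN, ← hB]
    ring
  rw [e_ff, e_fDf] at hkey
  obtain ⟨hkL, hkU⟩ := hkey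
  -- identify p and Stab
  have hpp : p = p' := rfl
  have hPfilter : (P.filter (fun q => g q.1 = true ∧ g q.2 = true)).card = B := by
    rw [hB]
    congr 1
    exact Finset.filter_filter _ _ _
  have hPcard : (P.card : ℚ) = (N:ℚ) * (C:ℚ) := by
    have : P.card = (kslice V k).card * (2*k).choose k := Stmt9.cardP hV'
    rw [this, ← hN, ← hC]
    push_cast
    ring
  have hStab : Stab = (B:ℚ) / ((N:ℚ) * (C:ℚ)) := by
    show ((P.filter (fun q => g q.1 = true ∧ g q.2 = true)).card : ℚ) / (P.card : ℚ) = _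
    rw [hPfilter, hPcard]
  have hA : (a:ℚ) = p' * (N:ℚ) := by
    rw [hp']
    field_simp
  rw [hA] at hkL hkU
  have hNC : (0:ℚ) < (N:ℚ) * (C:ℚ) := mul_pos hNq hCq
  rw [hpp, hStab]
  rw [← hC] at hkL hkU
  constructor
  · rw [le_div_iff₀ hNC]
    nlinarith [hkL]
  · rw [div_le_iff₀ hNC]
    nlinarith [hkU]
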